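/- For every graph G = (V,E), there exists an optimal edge-deletion set F (minimum set of edges whose removal makes G P_4-free) such that every module of G is also a module of the P_4-free graph H = (V, E \ F). -/

import Mathlib

variable {V : Type*}

/-- `{a,b,c,d}` induces a path `a - b - c - d` on four vertices in `G`. -/
def IsInducedP4 (G : SimpleGraph V) (a b c d : V) : Prop :=
  a ≠ b ∧ a ≠ c ∧ a ≠ d ∧ b ≠ c ∧ b ≠ d ∧ c ≠ d ∧
  G.Adj a b ∧ G.Adj b c ∧ G.Adj c d ∧ ¬ G.Adj a c ∧ ¬ G.Adj a d ∧ ¬ G.Adj b d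

/-- `G` has no induced path on four vertices. -/
def P4Free (G : SimpleGraph V) : Prop := ∀ a b c d : V, ¬ IsInducedP4 G a b c d

/-- `M` is a module of `G`: every vertex outside `M` is adjacent to all or none of `M`. -/
def IsModule (G : SimpleGraph V) (M : Set V) : Prop :=
  ∀ x ∉ M, (∀ v ∈ M, G.Adj x v) ∨ (∀ v ∈ M, ¬ G.Adj x v)

/-- `F` is an edge-deletion set of `G`: a set of edges whose removal makes `G` `P₄`-free. -/
def IsDelSet (G : SimpleGraph V) (F : Set (Sym2 V)) : Prop :=
  F ⊆ G.edgeSet ∧ P4Free (G.deleteEdges F)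

/-- `F` is an optimal (minimum-cardinality) edge-deletion set of `G`. -/
def IsOptDelSet (G : SimpleGraph V) (F : Set (Sym2 V)) : Prop :=
  IsDelSet G F ∧ ∀ F' : Set (Sym2 V), IsDelSet G F' → F.ncard ≤ F'.ncard

section AuxiliaryProofs

open Set

/-- The set of ordered pairs adjacent in `G` but not in `H`. -/
def delPairs (G H : SimpleGraph V) : Set (V × V) := {p | G.Adj p.1 p.2 ∧ ¬ H.Adj p.1 p.2}

def Pres (G H : SimpleGraph V) : Prop := ∀ M, IsModule G M → IsModule H M

def Full (G H : SimpleGraph V) : Prop :=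
  ∀ M : Set V, (∀ x ∉ M, ∀ m ∈ M, G.Adj x m) → ∀ x ∉ M, ∀ m ∈ M, H.Adj x m

def GoodOpt (G H : SimpleGraph V) : Prop :=
  H ≤ G ∧ P4Free H ∧ ∀ H', H' ≤ G → P4Free H' → (delPairs G H).ncard ≤ (delPairs G H').ncard

def Sol (G H : SimpleGraph V) : Prop := GoodOpt G H ∧ Pres G H ∧ Full G H

lemma mod_iff {G : SimpleGraph V} {M : Set V} (hM : IsModule G M) {x u w : V}
    (hx : x ∉ M) (hu : u ∈ M) (hw : w ∈ M) : G.Adj x u ↔ G.Adj x w := by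
  rcases hM x hx with h | h
  · exact iff_of_true (h u hu) (h w hw)
  · exact iff_of_false (h u hu) (h w hw)

lemma pattern {G : SimpleGraph V} {M : Set V} (hM : IsModule G M) {a b c d : V}
    (h : IsInducedP4 G a b c d) :
    (a ∈ M ∧ b ∈ M ∧ c ∈ M ∧ d ∈ M) ∨ (a ∉ M ∧ b ∉ M ∧ c ∉ M ∧ d ∉ M) ∨
    (a ∈ M ∧ b ∉ M ∧ c ∉ M ∧ d ∉ M) ∨ (a ∉ M ∧ b ∈ M ∧ c ∉ M ∧ d ∉ M) ∨
    (a ∉ M ∧ b ∉ M ∧ c ∈ M ∧ d ∉ M) ∨ (a ∉ M ∧ b ∉ M ∧ c ∉ M ∧ d ∈ M) := by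
  obtain ⟨hab, hac, had, hbc, hbd, hcd, eab, ebc, ecd, nac, nad, nbd⟩ := h
  have key : ∀ x ∉ M, ∀ u ∈ M, ∀ w ∈ M, (G.Adj x u ↔ G.Adj x w) :=
    fun x hx u hu w hw => mod_iff hM hx hu hw
  by_cases ha : a ∈ M <;> by_cases hb : b ∈ M <;> by_cases hc : c ∈ M <;> by_cases hd : d ∈ M
  · exact Or.inl ⟨ha, hb, hc, hd⟩
  · exact absurd (((key d hd c hc a ha).mp ecd.symm).symm) nad
  · exact absurd (((key c hc b hb a ha).mp ebc.symm).symm) nac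
  · exact absurd (((key c hc b hb a ha).mp ebc.symm).symm) nac
  · exact absurd (((key b hb a ha d hd).mp eab.symm)) nbd
  · exact absurd (((key d hd c hc a ha).mp ecd.symm).symm) nad
  · exact absurd (((key b hb a ha d hd).mp eab.symm)) nbd
  · exact Or.inr (Or.inr (Or.inl ⟨ha, hb, hc, hd⟩))
  · exact absurd ((key a ha b hb c hc).mp eab) nac
  · exact absurd ((key a ha b hb c hc).mp eab) nac
  · exact absurd ((key a ha b hb d hd).mp eab) nad
  · exact Or.inr (Or.inr (Or.inr (Or.inl ⟨ha, hb, hc, hd⟩)))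
  · exact absurd ((key b hb c hc d hd).mp ebc) nbd
  · exact Or.inr (Or.inr (Or.inr (Or.inr (Or.inl ⟨ha, hb, hc, hd⟩))))
  · exact Or.inr (Or.inr (Or.inr (Or.inr (Or.inr ⟨ha, hb, hc, hd⟩))))
  · exact Or.inr (Or.inl ⟨ha, hb, hc, hd⟩)

lemma isInducedP4_induce {G : SimpleGraph V} {A : Set V} {a b c d : A}
    (h : IsInducedP4 (G.induce A) a b c d) : IsInducedP4 G a b c d := by
  obtain ⟨hab, hac, had, hbc, hbd, hcd, eab, ebc, ecd, nac, nad, nbd⟩ := h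
  exact ⟨fun e => hab (Subtype.ext e), fun e => hac (Subtype.ext e), fun e => had (Subtype.ext e),
    fun e => hbc (Subtype.ext e), fun e => hbd (Subtype.ext e), fun e => hcd (Subtype.ext e),
    eab, ebc, ecd, nac, nad, nbd⟩

lemma P4Free_induce {G : SimpleGraph V} (h : P4Free G) (A : Set V) : P4Free (G.induce A) :=
  fun a b c d hp => h a b c d (isInducedP4_induce hp)

lemma induce_mono_graph {G H : SimpleGraph V} (h : H ≤ G) (A : Set V) :
    H.induce A ≤ G.induce A := fun {a b} hadj => h hadj

lemma isModule_induce {G : SimpleGraph V} {M : Set V} (hM : IsModule G M) (A : Set V) :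
    IsModule (G.induce A) {z : A | (z : V) ∈ M} := by
  intro x hx
  rcases hM x hx with h | h
  · exact Or.inl fun v hv => h v hv
  · exact Or.inr fun v hv => h v hv

-- counting transfer

lemma ncard_del_restrict {A : Set V} {G H : SimpleGraph V} {h : SimpleGraph A}
    (hagree : ∀ a b : A, H.Adj a b ↔ h.Adj a b) :
    {p : V × V | p.1 ∈ A ∧ p.2 ∈ A ∧ G.Adj p.1 p.2 ∧ ¬ H.Adj p.1 p.2}.ncard
      = (delPairs (G.induce A) h).ncard := by
  have hinj : Function.Injective (fun p : A × A => ((p.1 : V), (p.2 : V))) := by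
    rintro ⟨⟨x, hx⟩, ⟨y, hy⟩⟩ ⟨⟨x', hx'⟩, ⟨y', hy'⟩⟩ he
    simp only [Prod.mk.injEq] at he
    simp [Prod.ext_iff, Subtype.ext_iff, he.1, he.2]
  rw [← Set.ncard_image_of_injective (delPairs (G.induce A) h) hinj]
  congr 1
  ext ⟨x, y⟩
  constructor
  · rintro ⟨hx, hy, hadj, hnadj⟩
    exact ⟨(⟨x, hx⟩, ⟨y, hy⟩), ⟨hadj, fun hh => hnadj ((hagree _ _).mpr hh)⟩, rfl⟩
  · rintro ⟨⟨p, q⟩, ⟨hadj, hnadj⟩, he⟩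
    simp only [Prod.mk.injEq] at he
    obtain ⟨h1, h2⟩ := he
    subst h1; subst h2
    exact ⟨p.2, q.2, hadj, fun hh => hnadj ((hagree _ _).mp hh)⟩

-- doubling lemma

lemma ncard_pairs_eq_two_mul_edge [Finite V] (D : SimpleGraph V) :
    {p : V × V | D.Adj p.1 p.2}.ncard = 2 * D.edgeSet.ncard := by
  classical
  have : Fintype V := Fintype.ofFinite V
  rw [← SimpleGraph.coe_edgeFinset, Set.ncard_coe_finset,
    SimpleGraph.two_mul_card_edgeFinset, Set.ncard_eq_toFinset_card']
  congr 1
  ext ⟨x, y⟩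
  simp

lemma ncard_prod_set {α β : Type*} (s : Set α) (t : Set β) :
    (s ×ˢ t).ncard = s.ncard * t.ncard := by
  rw [← Nat.card_coe_set_eq, ← Nat.card_coe_set_eq, ← Nat.card_coe_set_eq,
    Nat.card_congr (Equiv.Set.prod s t), Nat.card_prod]

lemma exchange [Finite V] {G H : SimpleGraph V} {M : Set V} (hHG : H ≤ G) (hH : P4Free H)
    (hM : IsModule G M) (hne : M.Nonempty) :
    ∃ H₁, H₁ ≤ G ∧ P4Free H₁ ∧ (delPairs G H₁).ncard ≤ (delPairs G H).ncard ∧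
      (∃ v ∈ M, ∀ x ∉ M, ∀ m ∈ M, (H₁.Adj x m ↔ H.Adj x v)) ∧
      (∀ x y : V, (x ∈ M ↔ y ∈ M) → (H₁.Adj x y ↔ H.Adj x y)) := by
  classical
  -- the deficiency of u ∈ M
  set d : V → ℕ := fun u => {x | x ∉ M ∧ G.Adj x u ∧ ¬H.Adj x u}.ncard with hd
  obtain ⟨v, hv, hvmin⟩ := Set.exists_min_image M d M.toFinite hne
  -- the exchanged graph
  set H₁ : SimpleGraph V :=
    { Adj := fun x y => ((x ∈ M ↔ y ∈ M) ∧ H.Adj x y) ∨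
        (x ∈ M ∧ y ∉ M ∧ H.Adj y v) ∨ (y ∈ M ∧ x ∉ M ∧ H.Adj x v)
      symm := Std.Symm.mk <| by
        rintro x y (⟨hi, ha⟩ | ⟨h1, h2, h3⟩ | ⟨h1, h2, h3⟩)
        · exact Or.inl ⟨hi.symm, ha.symm⟩
        · exact Or.inr (Or.inr ⟨h1, h2, h3⟩)
        · exact Or.inr (Or.inl ⟨h1, h2, h3⟩)
      loopless := Std.Irrefl.mk <| by
        rintro x (⟨hi, ha⟩ | ⟨h1, h2, h3⟩ | ⟨h1, h2, h3⟩)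
        · exact H.irrefl ha
        · exact h2 h1
        · exact h2 h1 } with hH₁
  have hcross : ∀ x ∉ M, ∀ m ∈ M, (H₁.Adj x m ↔ H.Adj x v) := by
    intro x hx m hm
    constructor
    · rintro (⟨hi, _⟩ | ⟨h1, _, _⟩ | ⟨_, _, h3⟩)
      · exact absurd (hi.mpr hm) hx
      · exact absurd h1 hx
      · exact h3
    · intro h; exact Or.inr (Or.inr ⟨hm, hx, h⟩)
  have hsame : ∀ x y : V, (x ∈ M ↔ y ∈ M) → (H₁.Adj x y ↔ H.Adj x y) := by
    intro x y hi
    constructor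
    · rintro (⟨_, ha⟩ | ⟨h1, h2, _⟩ | ⟨h1, h2, _⟩)
      · exact ha
      · exact absurd (hi.mp h1) h2
      · exact absurd (hi.mpr h1) h2
    · intro h; exact Or.inl ⟨hi, h⟩
  have hle : H₁ ≤ G := by
    rintro x y (⟨_, ha⟩ | ⟨h1, h2, h3⟩ | ⟨h1, h2, h3⟩)
    · exact hHG ha
    · exact ((mod_iff hM h2 h1 hv).mpr (hHG h3)).symm
    · exact (mod_iff hM h2 h1 hv).mpr (hHG h3)
  have hmod₁ : IsModule H₁ M := by
    intro x hx
    by_cases hxa : H.Adj x v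
    · exact Or.inl fun m hm => (hcross x hx m hm).mpr hxa
    · exact Or.inr fun m hm ha => hxa ((hcross x hx m hm).mp ha)
  have hp4 : P4Free H₁ := by
    rintro a b c d ⟨hab, hac, had, hbc, hbd, hcd, eab, ebc, ecd, nac, nad, nbd⟩
    have hfull : IsInducedP4 H₁ a b c d :=
      ⟨hab, hac, had, hbc, hbd, hcd, eab, ebc, ecd, nac, nad, nbd⟩
    rcases pattern hmod₁ hfull with ⟨ha, hb, hc, hd⟩ | ⟨ha, hb, hc, hd⟩ | ⟨ha, hb, hc, hd⟩ |
      ⟨ha, hb, hc, hd⟩ | ⟨ha, hb, hc, hd⟩ | ⟨ha, hb, hc, hd⟩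
    · have iab : a ∈ M ↔ b ∈ M := iff_of_true ha hb
      have iac : a ∈ M ↔ c ∈ M := iff_of_true ha hc
      have iad : a ∈ M ↔ d ∈ M := iff_of_true ha hd
      have ibc : b ∈ M ↔ c ∈ M := iff_of_true hb hc
      have ibd : b ∈ M ↔ d ∈ M := iff_of_true hb hd
      have icd : c ∈ M ↔ d ∈ M := iff_of_true hc hd
      exact hH a b c d ⟨hab, hac, had, hbc, hbd, hcd, (hsame a b iab).mp eab,
        (hsame b c ibc).mp ebc, (hsame c d icd).mp ecd,
        fun h => nac ((hsame a c iac).mpr h), fun h => nad ((hsame a d iad).mpr h),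
        fun h => nbd ((hsame b d ibd).mpr h)⟩
    · have iab : a ∈ M ↔ b ∈ M := iff_of_false ha hb
      have iac : a ∈ M ↔ c ∈ M := iff_of_false ha hc
      have iad : a ∈ M ↔ d ∈ M := iff_of_false ha hd
      have ibc : b ∈ M ↔ c ∈ M := iff_of_false hb hc
      have ibd : b ∈ M ↔ d ∈ M := iff_of_false hb hd
      have icd : c ∈ M ↔ d ∈ M := iff_of_false hc hd
      exact hH a b c d ⟨hab, hac, had, hbc, hbd, hcd, (hsame a b iab).mp eab,
        (hsame b c ibc).mp ebc, (hsame c d icd).mp ecd,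
        fun h => nac ((hsame a c iac).mpr h), fun h => nad ((hsame a d iad).mpr h),
        fun h => nbd ((hsame b d ibd).mpr h)⟩
    · -- only a ∈ M ; replace a by v : v - b - c - d
      refine hH v b c d ⟨fun e => hb (e ▸ hv), fun e => hc (e ▸ hv), fun e => hd (e ▸ hv),
        hbc, hbd, hcd, ?_, (hsame b c (iff_of_false hb hc)).mp ebc,
        (hsame c d (iff_of_false hc hd)).mp ecd, ?_, ?_,
        fun h => nbd ((hsame b d (iff_of_false hb hd)).mpr h)⟩
      · exact ((hcross b hb a ha).mp eab.symm).symm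
      · exact fun h => nac ((hcross c hc a ha).mpr h.symm).symm
      · exact fun h => nad ((hcross d hd a ha).mpr h.symm).symm
    · -- only b ∈ M : a - v - c - d
      refine hH a v c d ⟨fun e => ha (e ▸ hv), hac, had, fun e => hc (e ▸ hv),
        fun e => hd (e ▸ hv), hcd, ?_, ?_, (hsame c d (iff_of_false hc hd)).mp ecd,
        fun h => nac ((hsame a c (iff_of_false ha hc)).mpr h), fun h => nad ((hsame a d (iff_of_false ha hd)).mpr h), ?_⟩
      · exact (hcross a ha b hb).mp eab
      · exact ((hcross c hc b hb).mp ebc.symm).symm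
      · exact fun h => nbd (((hcross d hd b hb).mpr h.symm).symm)
    · -- only c ∈ M : a - b - v - d
      refine hH a b v d ⟨hab, fun e => ha (e ▸ hv), had, fun e => hb (e ▸ hv), hbd,
        fun e => hd (e ▸ hv), (hsame a b (iff_of_false ha hb)).mp eab, ?_, ?_, ?_,
        fun h => nad ((hsame a d (iff_of_false ha hd)).mpr h), ?_⟩
      · exact (hcross b hb c hc).mp ebc
      · exact ((hcross d hd c hc).mp ecd.symm).symm
      · exact fun h => nac ((hcross a ha c hc).mpr h)
      · exact fun h => nbd ((hsame b d (iff_of_false hb hd)).mpr h)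
    · -- only d ∈ M : a - b - c - v
      refine hH a b c v ⟨hab, hac, fun e => ha (e ▸ hv), hbc, fun e => hb (e ▸ hv),
        fun e => hc (e ▸ hv), (hsame a b (iff_of_false ha hb)).mp eab,
        (hsame b c (iff_of_false hb hc)).mp ebc, ?_,
        fun h => nac ((hsame a c (iff_of_false ha hc)).mpr h), ?_, ?_⟩
      · exact (hcross c hc d hd).mp ecd
      · exact fun h => nad ((hcross a ha d hd).mpr h)
      · exact fun h => nbd ((hcross b hb d hd).mpr h)
  -- counting
  have hcount : (delPairs G H₁).ncard ≤ (delPairs G H).ncard := by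
    have : Fintype V := Fintype.ofFinite V
    set SS : SimpleGraph V → Set (V × V) := fun K =>
      {p | (p.1 ∈ M ↔ p.2 ∈ M) ∧ G.Adj p.1 p.2 ∧ ¬K.Adj p.1 p.2} with hSS
    set C1 : SimpleGraph V → Set (V × V) := fun K =>
      {p | p.1 ∉ M ∧ p.2 ∈ M ∧ G.Adj p.1 p.2 ∧ ¬K.Adj p.1 p.2} with hC1
    set C2 : SimpleGraph V → Set (V × V) := fun K =>
      {p | p.1 ∈ M ∧ p.2 ∉ M ∧ G.Adj p.1 p.2 ∧ ¬K.Adj p.1 p.2} with hC2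
    have hdecomp : ∀ K : SimpleGraph V,
        (delPairs G K).ncard = (SS K).ncard + (C1 K).ncard + (C2 K).ncard := by
      intro K
      have he : delPairs G K = (SS K ∪ C1 K) ∪ C2 K := by
        ext ⟨x, y⟩
        simp only [delPairs, hSS, hC1, hC2, Set.mem_union, Set.mem_setOf_eq]
        constructor
        · rintro ⟨ha, hn⟩
          by_cases hx : x ∈ M <;> by_cases hy : y ∈ M
          · exact Or.inl (Or.inl ⟨iff_of_true hx hy, ha, hn⟩)
          · exact Or.inr ⟨hx, hy, ha, hn⟩
          · exact Or.inl (Or.inr ⟨hx, hy, ha, hn⟩)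
          · exact Or.inl (Or.inl ⟨iff_of_false hx hy, ha, hn⟩)
        · rintro ((⟨_, ha, hn⟩ | ⟨_, _, ha, hn⟩) | ⟨_, _, ha, hn⟩) <;> exact ⟨ha, hn⟩
      have hd1 : Disjoint (SS K) (C1 K) := by
        rw [Set.disjoint_left]
        rintro ⟨x, y⟩ ⟨hi, _, _⟩ ⟨hx, hy, _, _⟩
        exact hx (hi.mpr hy)
      have hd2 : Disjoint (SS K ∪ C1 K) (C2 K) := by
        rw [Set.disjoint_left]
        rintro ⟨x, y⟩ (⟨hi, _, _⟩ | ⟨hx, _, _, _⟩) ⟨hx', hy', _, _⟩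
        · exact hy' (hi.mp hx')
        · exact hx hx'
      rw [he, Set.ncard_union_eq hd2 (Set.toFinite _) (Set.toFinite _),
        Set.ncard_union_eq hd1 (Set.toFinite _) (Set.toFinite _)]
    have hSSeq : SS H₁ = SS H := by
      ext ⟨x, y⟩
      simp only [hSS, Set.mem_setOf_eq]
      constructor
      · rintro ⟨hi, ha, hn⟩; exact ⟨hi, ha, fun h => hn ((hsame x y hi).mpr h)⟩
      · rintro ⟨hi, ha, hn⟩; exact ⟨hi, ha, fun h => hn ((hsame x y hi).mp h)⟩
    have hswap : ∀ K : SimpleGraph V, (C2 K).ncard = (C1 K).ncard := by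
      intro K
      have hs : C2 K = Prod.swap '' (C1 K) := by
        ext ⟨x, y⟩
        constructor
        · rintro ⟨h1, h2, ha, hn⟩
          exact ⟨(y, x), ⟨h2, h1, ha.symm, fun h => hn h.symm⟩, rfl⟩
        · rintro ⟨⟨p, q⟩, ⟨h1, h2, ha, hn⟩, he⟩
          cases he
          exact ⟨h2, h1, ha.symm, fun h => hn h.symm⟩
      rw [hs, Set.ncard_image_of_injective _ Prod.swap_injective]
    have hC1H₁ : C1 H₁ = {x | x ∉ M ∧ G.Adj x v ∧ ¬H.Adj x v} ×ˢ M := by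
      ext ⟨x, m⟩
      simp only [hC1, Set.mem_setOf_eq, Set.mem_prod]
      constructor
      · rintro ⟨hx, hm, ha, hn⟩
        exact ⟨⟨hx, (mod_iff hM hx hm hv).mp ha, fun h => hn ((hcross x hx m hm).mpr h)⟩, hm⟩
      · rintro ⟨⟨hx, ha, hn⟩, hm⟩
        exact ⟨hx, hm, (mod_iff hM hx hm hv).mpr ha, fun h => hn ((hcross x hx m hm).mp h)⟩
    have hBval : (C1 H₁).ncard = {x | x ∉ M ∧ G.Adj x v ∧ ¬H.Adj x v}.ncard * M.ncard := by
      rw [hC1H₁, ncard_prod_set]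
    have havg : M.ncard * d v ≤ (C1 H).ncard := by
      have hT : (C1 H).ncard = ((C1 H).toFinset).card := Set.ncard_eq_toFinset_card' _
      have hfib : ((C1 H).toFinset).card =
          ∑ m ∈ M.toFinset, (((C1 H).toFinset).filter (fun p => p.2 = m)).card := by
        refine Finset.card_eq_sum_card_fiberwise ?_
        intro p hp
        rw [Finset.mem_coe, Set.mem_toFinset] at hp
        exact Set.mem_toFinset.mpr hp.2.1
      have hfibcard : ∀ m ∈ M.toFinset, d v ≤ (((C1 H).toFinset).filter (fun p => p.2 = m)).card := by
        intro m hm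
        rw [Set.mem_toFinset] at hm
        have himg : (((C1 H).toFinset).filter (fun p => p.2 = m)) =
            ({x | x ∉ M ∧ G.Adj x m ∧ ¬H.Adj x m}.toFinset).image (fun x => (x, m)) := by
          ext ⟨x, y⟩
          simp only [Finset.mem_filter, Set.mem_toFinset, Finset.mem_image, hC1,
            Set.mem_setOf_eq]
          constructor
          · rintro ⟨⟨h1, h2, h3, h4⟩, rfl⟩
            exact ⟨x, ⟨h1, h3, h4⟩, rfl⟩
          · rintro ⟨z, ⟨h1, h3, h4⟩, he⟩
            rw [Prod.mk.injEq] at he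
            obtain ⟨rfl, rfl⟩ := he
            exact ⟨⟨h1, hm, h3, h4⟩, rfl⟩
        rw [himg, Finset.card_image_of_injective _ (fun a b h => congrArg Prod.fst h)]
        have hdm : d m = ({x | x ∉ M ∧ G.Adj x m ∧ ¬H.Adj x m}.toFinset).card :=
          Set.ncard_eq_toFinset_card' _
        rw [← hdm]
        exact hvmin m hm
      calc M.ncard * d v = M.toFinset.card * d v := by rw [Set.ncard_eq_toFinset_card']
        _ = M.toFinset.card • d v := (smul_eq_mul _ _).symm
        _ ≤ ∑ m ∈ M.toFinset, (((C1 H).toFinset).filter (fun p => p.2 = m)).card :=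
            Finset.card_nsmul_le_sum M.toFinset _ (d v) hfibcard
        _ = ((C1 H).toFinset).card := hfib.symm
        _ = (C1 H).ncard := hT.symm
    have hdveq : d v = {x | x ∉ M ∧ G.Adj x v ∧ ¬H.Adj x v}.ncard := rfl
    have hC1le : (C1 H₁).ncard ≤ (C1 H).ncard := by
      rw [hBval, ← hdveq, mul_comm]
      exact havg
    rw [hdecomp H₁, hdecomp H, hSSeq, hswap H₁, hswap H]
    omega
  exact ⟨H₁, hle, hp4, hcount, ⟨v, hv, hcross⟩, hsame⟩

lemma iter_exchange [Finite V] {G : SimpleGraph V} (S : Set (Set V)) (hS : S.Finite) :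
    (∀ P ∈ S, IsModule G P ∧ P.Nonempty) → (S.Pairwise Disjoint) →
    ∀ H : SimpleGraph V, H ≤ G → P4Free H →
    ∃ H₁, H₁ ≤ G ∧ P4Free H₁ ∧ (delPairs G H₁).ncard ≤ (delPairs G H).ncard ∧
      ∀ P ∈ S, ∀ x ∉ P, ∀ m ∈ P, ∀ m' ∈ P, (H₁.Adj x m ↔ H₁.Adj x m') := by
  refine Set.Finite.induction_on (motive := fun S _ => (∀ P ∈ S, IsModule G P ∧ P.Nonempty) →
      (S.Pairwise Disjoint) → ∀ H : SimpleGraph V, H ≤ G → P4Free H →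
      ∃ H₁, H₁ ≤ G ∧ P4Free H₁ ∧ (delPairs G H₁).ncard ≤ (delPairs G H).ncard ∧
      ∀ P ∈ S, ∀ x ∉ P, ∀ m ∈ P, ∀ m' ∈ P, (H₁.Adj x m ↔ H₁.Adj x m')) S hS ?_ ?_
  · intro _ _ H hHG hH
    exact ⟨H, hHG, hH, le_rfl, fun P hP => absurd hP (Set.notMem_empty P)⟩
  · intro P S' hPS' hS' ih hmods hdisj H hHG hH
    obtain ⟨H₁, h1G, h1p4, h1c, h1uni⟩ :=
      ih (fun Q hQ => hmods Q (Set.mem_insert_of_mem _ hQ))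
        (hdisj.mono (Set.subset_insert _ _)) H hHG hH
    obtain ⟨hPmod, hPne⟩ := hmods P (Set.mem_insert _ _)
    obtain ⟨H₂, h2G, h2p4, h2c, ⟨v, hv, hcross⟩, hsame⟩ := exchange h1G h1p4 hPmod hPne
    refine ⟨H₂, h2G, h2p4, h2c.trans h1c, ?_⟩
    intro Q hQ x hx m hm m' hm'
    rcases hQ with rfl | hQ
    · exact (hcross x hx m hm).trans (hcross x hx m' hm').symm
    · have hQP : Q ≠ P := fun e => hPS' (e ▸ hQ)
      have hdQP : Disjoint Q P :=
        hdisj (Set.mem_insert_of_mem _ hQ) (Set.mem_insert _ _) hQP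
      have hmP : m ∉ P := fun h => (Set.disjoint_left.mp hdQP hm) h
      have hmP' : m' ∉ P := fun h => (Set.disjoint_left.mp hdQP hm') h
      have hvQ : v ∉ Q := fun h => (Set.disjoint_left.mp hdQP h) hv
      by_cases hxP : x ∈ P
      · have e1 : H₂.Adj x m ↔ H₁.Adj m v :=
          ⟨fun h => (hcross m hmP x hxP).mp h.symm, fun h => ((hcross m hmP x hxP).mpr h).symm⟩
        have e2 : H₂.Adj x m' ↔ H₁.Adj m' v :=
          ⟨fun h => (hcross m' hmP' x hxP).mp h.symm, fun h => ((hcross m' hmP' x hxP).mpr h).symm⟩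
        have e3 : H₁.Adj m v ↔ H₁.Adj m' v := by
          have := h1uni Q hQ v hvQ m hm m' hm'
          exact ⟨fun h => ((this.mp h.symm)).symm, fun h => ((this.mpr h.symm)).symm⟩
        exact e1.trans (e3.trans e2.symm)
      · have e1 : H₂.Adj x m ↔ H₁.Adj x m := hsame x m (iff_of_false hxP hmP)
        have e2 : H₂.Adj x m' ↔ H₁.Adj x m' := hsame x m' (iff_of_false hxP hmP')
        exact e1.trans ((h1uni Q hQ x hx m hm m' hm').trans e2.symm)

lemma ncard_biUnion_le_biUnion {α ι : Type*} [Finite α] (t : Finset ι) (f g : ι → Set α)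
    (hf : ∀ i ∈ t, ∀ j ∈ t, i ≠ j → Disjoint (f i) (f j))
    (hg : ∀ i ∈ t, ∀ j ∈ t, i ≠ j → Disjoint (g i) (g j))
    (hle : ∀ i ∈ t, (f i).ncard ≤ (g i).ncard) :
    (⋃ i ∈ t, f i).ncard ≤ (⋃ i ∈ t, g i).ncard := by
  classical
  induction t using Finset.induction with
  | empty => simp
  | @insert i t hit ih =>
    have hfd : Disjoint (f i) (⋃ j ∈ t, f j) := by
      rw [Set.disjoint_left]
      intro x hx hx'
      obtain ⟨j, hj, hxj⟩ := Set.mem_iUnion₂.mp hx'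
      exact Set.disjoint_left.mp
        (hf i (Finset.mem_insert_self _ _) j (Finset.mem_insert_of_mem hj)
          (fun e => hit (e ▸ hj))) hx hxj
    have hgd : Disjoint (g i) (⋃ j ∈ t, g j) := by
      rw [Set.disjoint_left]
      intro x hx hx'
      obtain ⟨j, hj, hxj⟩ := Set.mem_iUnion₂.mp hx'
      exact Set.disjoint_left.mp
        (hg i (Finset.mem_insert_self _ _) j (Finset.mem_insert_of_mem hj)
          (fun e => hit (e ▸ hj))) hx hxj
    rw [Finset.set_biUnion_insert, Finset.set_biUnion_insert,
      Set.ncard_union_eq hfd (Set.toFinite _) (Set.toFinite _),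
      Set.ncard_union_eq hgd (Set.toFinite _) (Set.toFinite _)]
    exact Nat.add_le_add (hle i (Finset.mem_insert_self _ _))
      (ih (fun a ha b hb => hf a (Finset.mem_insert_of_mem ha) b (Finset.mem_insert_of_mem hb))
        (fun a ha b hb => hg a (Finset.mem_insert_of_mem ha) b (Finset.mem_insert_of_mem hb))
        (fun a ha => hle a (Finset.mem_insert_of_mem ha)))

lemma module_union {G : SimpleGraph V} {A B : Set V} (hA : IsModule G A) (hB : IsModule G B)
    (hAB : (A ∩ B).Nonempty) : IsModule G (A ∪ B) := by
  obtain ⟨z, hzA, hzB⟩ := hAB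
  intro x hx
  have hxA : x ∉ A := fun h => hx (Or.inl h)
  have hxB : x ∉ B := fun h => hx (Or.inr h)
  rcases hA x hxA with h1 | h1
  · left
    rintro v (hv | hv)
    · exact h1 v hv
    · rcases hB x hxB with h2 | h2
      · exact h2 v hv
      · exact absurd (h1 z hzA) (h2 z hzB)
  · right
    rintro v (hv | hv)
    · exact h1 v hv
    · rcases hB x hxB with h2 | h2
      · exact absurd (h2 z hzB) (h1 z hzA)
      · exact h2 v hv

lemma module_singleton (G : SimpleGraph V) (x : V) : IsModule G {x} := by
  intro y hy
  by_cases h : G.Adj y x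
  · left; rintro v rfl; exact h
  · right; rintro v rfl; exact h

lemma p4_part {K : SimpleGraph V} {A : Set V} {h : SimpleGraph ↥A}
    (hagree : ∀ a b : ↥A, K.Adj a b ↔ h.Adj a b) {a b c d : V}
    (ha : a ∈ A) (hb : b ∈ A) (hc : c ∈ A) (hd : d ∈ A)
    (hp : IsInducedP4 K a b c d) :
    IsInducedP4 h ⟨a, ha⟩ ⟨b, hb⟩ ⟨c, hc⟩ ⟨d, hd⟩ := by
  obtain ⟨hab, hac, had, hbc, hbd, hcd, eab, ebc, ecd, nac, nad, nbd⟩ := hp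
  exact ⟨fun e => hab (congrArg Subtype.val e), fun e => hac (congrArg Subtype.val e),
    fun e => had (congrArg Subtype.val e), fun e => hbc (congrArg Subtype.val e),
    fun e => hbd (congrArg Subtype.val e), fun e => hcd (congrArg Subtype.val e),
    (hagree _ _).mp eab, (hagree _ _).mp ebc, (hagree _ _).mp ecd,
    fun e => nac ((hagree _ _).mpr e), fun e => nad ((hagree _ _).mpr e),
    fun e => nbd ((hagree _ _).mpr e)⟩

lemma case_split [Finite V] {G : SimpleGraph V} {A : Set V}
    {HA : SimpleGraph ↥A} {HB : SimpleGraph ↥(Aᶜ)} (hsplit : ∀ a ∈ A, ∀ b ∈ Aᶜ, ¬ G.Adj a b)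
    (sA : Sol (G.induce A) HA) (sB : Sol (G.induce Aᶜ) HB) : ∃ H, Sol G H := by
  classical
  obtain ⟨⟨hAle, hAp4, hAopt⟩, hApres, hAfull⟩ := sA
  obtain ⟨⟨hBle, hBp4, hBopt⟩, hBpres, hBfull⟩ := sB
  set H : SimpleGraph V :=
    { Adj := fun x y => (∃ (hx : x ∈ A) (hy : y ∈ A), HA.Adj ⟨x, hx⟩ ⟨y, hy⟩) ∨
        (∃ (hx : x ∈ Aᶜ) (hy : y ∈ Aᶜ), HB.Adj ⟨x, hx⟩ ⟨y, hy⟩)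
      symm := Std.Symm.mk <| by
        rintro x y (⟨hx, hy, h⟩ | ⟨hx, hy, h⟩)
        · exact Or.inl ⟨hy, hx, h.symm⟩
        · exact Or.inr ⟨hy, hx, h.symm⟩
      loopless := Std.Irrefl.mk <| by
        rintro x (⟨hx, hy, h⟩ | ⟨hx, hy, h⟩) <;> exact h.ne rfl } with hHdef
  have hagreeA : ∀ a b : ↥A, H.Adj a b ↔ HA.Adj a b := by
    rintro ⟨a, ha⟩ ⟨b, hb⟩
    constructor
    · rintro (⟨hx, hy, h⟩ | ⟨hx, hy, h⟩)
      · exact h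
      · exact absurd ha hx
    · intro h; exact Or.inl ⟨ha, hb, h⟩
  have hagreeB : ∀ a b : ↥(Aᶜ), H.Adj a b ↔ HB.Adj a b := by
    rintro ⟨a, ha⟩ ⟨b, hb⟩
    constructor
    · rintro (⟨hx, hy, h⟩ | ⟨hx, hy, h⟩)
      · exact absurd hx ha
      · exact h
    · intro h; exact Or.inr ⟨ha, hb, h⟩
  have hside : ∀ x y : V, H.Adj x y → ((x ∈ A ∧ y ∈ A) ∨ (x ∈ Aᶜ ∧ y ∈ Aᶜ)) := by
    rintro x y (⟨hx, hy, _⟩ | ⟨hx, hy, _⟩)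
    · exact Or.inl ⟨hx, hy⟩
    · exact Or.inr ⟨hx, hy⟩
  have hHG : H ≤ G := by
    rintro x y (⟨hx, hy, h⟩ | ⟨hx, hy, h⟩)
    · exact hAle h
    · exact hBle h
  have hp4 : P4Free H := by
    rintro a b c d hp
    obtain ⟨hab, hac, had, hbc, hbd, hcd, eab, ebc, ecd, nac, nad, nbd⟩ := hp
    rcases hside a b eab with ⟨ha, hb⟩ | ⟨ha, hb⟩
    · rcases hside b c ebc with ⟨_, hc⟩ | ⟨hb', _⟩
      · rcases hside c d ecd with ⟨_, hd⟩ | ⟨hc', _⟩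
        · exact hAp4 _ _ _ _ (p4_part hagreeA ha hb hc hd
            ⟨hab, hac, had, hbc, hbd, hcd, eab, ebc, ecd, nac, nad, nbd⟩)
        · exact absurd hc hc'
      · exact absurd hb hb'
    · rcases hside b c ebc with ⟨hb', _⟩ | ⟨_, hc⟩
      · exact absurd hb' hb
      · rcases hside c d ecd with ⟨hc', _⟩ | ⟨_, hd⟩
        · exact absurd hc' hc
        · exact hBp4 _ _ _ _ (p4_part hagreeB ha hb hc hd
            ⟨hab, hac, had, hbc, hbd, hcd, eab, ebc, ecd, nac, nad, nbd⟩)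
  have hpres : Pres G H := by
    intro M hM x hx
    by_cases hex : ∃ m ∈ M, H.Adj x m
    · left
      obtain ⟨m₀, hm₀, ha₀⟩ := hex
      have hallG : ∀ m ∈ M, G.Adj x m := by
        rcases hM x hx with h | h
        · exact h
        · exact absurd (hHG ha₀) (h m₀ hm₀)
      intro m hm
      rcases hside x m₀ ha₀ with ⟨hxA, hm₀A⟩ | ⟨hxA, hm₀A⟩
      · by_cases hmA : m ∈ A
        · have hMA : IsModule (G.induce A) {z : ↥A | (z : V) ∈ M} := isModule_induce hM A
          rcases hApres _ hMA ⟨x, hxA⟩ hx with h | h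
          · exact (hagreeA ⟨x, hxA⟩ ⟨m, hmA⟩).mpr (h ⟨m, hmA⟩ hm)
          · exact absurd ((hagreeA ⟨x, hxA⟩ ⟨m₀, hm₀A⟩).mp ha₀) (h ⟨m₀, hm₀A⟩ hm₀)
        · exact absurd (hallG m hm) (hsplit x hxA m hmA)
      · by_cases hmB : m ∈ Aᶜ
        · have hMB : IsModule (G.induce Aᶜ) {z : ↥(Aᶜ) | (z : V) ∈ M} := isModule_induce hM Aᶜ
          rcases hBpres _ hMB ⟨x, hxA⟩ hx with h | h
          · exact (hagreeB ⟨x, hxA⟩ ⟨m, hmB⟩).mpr (h ⟨m, hmB⟩ hm)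
          · exact absurd ((hagreeB ⟨x, hxA⟩ ⟨m₀, hm₀A⟩).mp ha₀) (h ⟨m₀, hm₀A⟩ hm₀)
        · exact absurd ((hallG m hm).symm) (hsplit m (notMem_compl_iff.mp hmB) x hxA)
    · right
      exact fun m hm ha => hex ⟨m, hm, ha⟩
  have hfull : Full G H := by
    intro M hMfull x hx m hm
    have hGxm : G.Adj x m := hMfull x hx m hm
    by_cases hxA : x ∈ A
    · by_cases hmA : m ∈ A
      · have : HA.Adj ⟨x, hxA⟩ ⟨m, hmA⟩ := by
          refine hAfull {z : ↥A | (z : V) ∈ M} ?_ ⟨x, hxA⟩ hx ⟨m, hmA⟩ hm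
          intro z hz w hw
          exact hMfull z hz w hw
        exact (hagreeA _ _).mpr this
      · exact absurd hGxm (hsplit x hxA m hmA)
    · by_cases hmA : m ∈ A
      · exact absurd hGxm.symm (hsplit m hmA x hxA)
      · have : HB.Adj ⟨x, hxA⟩ ⟨m, hmA⟩ := by
          refine hBfull {z : ↥(Aᶜ) | (z : V) ∈ M} ?_ ⟨x, hxA⟩ hx ⟨m, hmA⟩ hm
          intro z hz w hw
          exact hMfull z hz w hw
        exact (hagreeB _ _).mpr this
  have hopt : ∀ H', H' ≤ G → P4Free H' →
      (delPairs G H).ncard ≤ (delPairs G H').ncard := by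
    intro H' hH'G hH'p4
    have hdec : ∀ K : SimpleGraph V, K ≤ G → delPairs G K =
        {p : V × V | p.1 ∈ A ∧ p.2 ∈ A ∧ G.Adj p.1 p.2 ∧ ¬K.Adj p.1 p.2} ∪
        {p : V × V | p.1 ∈ Aᶜ ∧ p.2 ∈ Aᶜ ∧ G.Adj p.1 p.2 ∧ ¬K.Adj p.1 p.2} := by
      intro K _
      ext ⟨x, y⟩
      simp only [delPairs, Set.mem_union, Set.mem_setOf_eq]
      constructor
      · rintro ⟨ha, hn⟩
        by_cases hx : x ∈ A <;> by_cases hy : y ∈ A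
        · exact Or.inl ⟨hx, hy, ha, hn⟩
        · exact absurd ha (hsplit x hx y hy)
        · exact absurd ha.symm (hsplit y hy x hx)
        · exact Or.inr ⟨hx, hy, ha, hn⟩
      · rintro (⟨_, _, ha, hn⟩ | ⟨_, _, ha, hn⟩) <;> exact ⟨ha, hn⟩
    have hdisj : ∀ K : SimpleGraph V, Disjoint
        {p : V × V | p.1 ∈ A ∧ p.2 ∈ A ∧ G.Adj p.1 p.2 ∧ ¬K.Adj p.1 p.2}
        {p : V × V | p.1 ∈ Aᶜ ∧ p.2 ∈ Aᶜ ∧ G.Adj p.1 p.2 ∧ ¬K.Adj p.1 p.2} := by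
      intro K
      rw [Set.disjoint_left]
      rintro ⟨x, y⟩ ⟨hx, _, _, _⟩ ⟨hx', _, _, _⟩
      exact hx' hx
    have e1 : (delPairs G H).ncard =
        (delPairs (G.induce A) HA).ncard + (delPairs (G.induce Aᶜ) HB).ncard := by
      rw [hdec H hHG, Set.ncard_union_eq (hdisj H) (Set.toFinite _) (Set.toFinite _),
        ncard_del_restrict hagreeA, ncard_del_restrict hagreeB]
    have e2 : (delPairs G H').ncard =
        (delPairs (G.induce A) (H'.induce A)).ncard +
        (delPairs (G.induce Aᶜ) (H'.induce Aᶜ)).ncard := by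
      rw [hdec H' hH'G, Set.ncard_union_eq (hdisj H') (Set.toFinite _) (Set.toFinite _),
        ncard_del_restrict (h := H'.induce A) (fun a b => Iff.rfl),
        ncard_del_restrict (h := H'.induce Aᶜ) (fun a b => Iff.rfl)]
    rw [e1, e2]
    exact Nat.add_le_add
      (hAopt _ (induce_mono_graph hH'G A) (P4Free_induce hH'p4 A))
      (hBopt _ (induce_mono_graph hH'G Aᶜ) (P4Free_induce hH'p4 Aᶜ))
  exact ⟨H, ⟨hHG, hp4, hopt⟩, hpres, hfull⟩

lemma case_cosplit [Finite V] {G : SimpleGraph V} {A : Set V}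
    {HA : SimpleGraph ↥A} {HB : SimpleGraph ↥(Aᶜ)} (hco : ∀ a ∈ A, ∀ b ∈ Aᶜ, G.Adj a b)
    (sA : Sol (G.induce A) HA) (sB : Sol (G.induce Aᶜ) HB) : ∃ H, Sol G H := by
  classical
  obtain ⟨⟨hAle, hAp4, hAopt⟩, hApres, hAfull⟩ := sA
  obtain ⟨⟨hBle, hBp4, hBopt⟩, hBpres, hBfull⟩ := sB
  set H : SimpleGraph V :=
    { Adj := fun x y => (∃ (hx : x ∈ A) (hy : y ∈ A), HA.Adj ⟨x, hx⟩ ⟨y, hy⟩) ∨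
        (∃ (hx : x ∈ Aᶜ) (hy : y ∈ Aᶜ), HB.Adj ⟨x, hx⟩ ⟨y, hy⟩) ∨
        (x ∈ A ∧ y ∈ Aᶜ) ∨ (x ∈ Aᶜ ∧ y ∈ A)
      symm := Std.Symm.mk <| by
        rintro x y (⟨hx, hy, h⟩ | ⟨hx, hy, h⟩ | ⟨hx, hy⟩ | ⟨hx, hy⟩)
        · exact Or.inl ⟨hy, hx, h.symm⟩
        · exact Or.inr (Or.inl ⟨hy, hx, h.symm⟩)
        · exact Or.inr (Or.inr (Or.inr ⟨hy, hx⟩))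
        · exact Or.inr (Or.inr (Or.inl ⟨hy, hx⟩))
      loopless := Std.Irrefl.mk <| by
        rintro x (⟨hx, hy, h⟩ | ⟨hx, hy, h⟩ | ⟨hx, hy⟩ | ⟨hx, hy⟩)
        · exact h.ne rfl
        · exact h.ne rfl
        · exact hy hx
        · exact hx hy } with hHdef
  have hagreeA : ∀ a b : ↥A, H.Adj a b ↔ HA.Adj a b := by
    rintro ⟨a, ha⟩ ⟨b, hb⟩
    constructor
    · rintro (⟨hx, hy, h⟩ | ⟨hx, hy, h⟩ | ⟨hx, hy⟩ | ⟨hx, hy⟩)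
      · exact h
      · exact absurd ha hx
      · exact absurd hb hy
      · exact absurd ha hx
    · intro h; exact Or.inl ⟨ha, hb, h⟩
  have hagreeB : ∀ a b : ↥(Aᶜ), H.Adj a b ↔ HB.Adj a b := by
    rintro ⟨a, ha⟩ ⟨b, hb⟩
    constructor
    · rintro (⟨hx, hy, h⟩ | ⟨hx, hy, h⟩ | ⟨hx, hy⟩ | ⟨hx, hy⟩)
      · exact absurd hx ha
      · exact h
      · exact absurd hx ha
      · exact absurd hy hb
    · intro h; exact Or.inr (Or.inl ⟨ha, hb, h⟩)
  have hcrossH : ∀ x ∈ A, ∀ y ∈ Aᶜ, H.Adj x y := fun x hx y hy =>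
    Or.inr (Or.inr (Or.inl ⟨hx, hy⟩))
  have hmodA : IsModule H A := by
    intro x hx
    exact Or.inl fun v hv => Or.inr (Or.inr (Or.inr ⟨hx, hv⟩))
  have hmodB : IsModule H (Aᶜ) := by
    intro x hx
    rw [Set.notMem_compl_iff] at hx
    exact Or.inl fun v hv => Or.inr (Or.inr (Or.inl ⟨hx, hv⟩))
  have hHG : H ≤ G := by
    rintro x y (⟨hx, hy, h⟩ | ⟨hx, hy, h⟩ | ⟨hx, hy⟩ | ⟨hx, hy⟩)
    · exact hAle h
    · exact hBle h
    · exact hco x hx y hy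
    · exact (hco y hy x hx).symm
  have hp4 : P4Free H := by
    rintro a b c d hp
    rcases pattern hmodA hp with ⟨ha, hb, hc, hd⟩ | ⟨ha, hb, hc, hd⟩ | h1 | h1 | h1 | h1
    · exact hAp4 _ _ _ _ (p4_part hagreeA ha hb hc hd hp)
    · exact hBp4 _ _ _ _ (p4_part hagreeB ha hb hc hd hp)
    · rcases pattern hmodB hp with h2 | h2 | h2 | h2 | h2 | h2 <;>
        (simp only [Set.mem_compl_iff] at h2; tauto)
    · rcases pattern hmodB hp with h2 | h2 | h2 | h2 | h2 | h2 <;>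
        (simp only [Set.mem_compl_iff] at h2; tauto)
    · rcases pattern hmodB hp with h2 | h2 | h2 | h2 | h2 | h2 <;>
        (simp only [Set.mem_compl_iff] at h2; tauto)
    · rcases pattern hmodB hp with h2 | h2 | h2 | h2 | h2 | h2 <;>
        (simp only [Set.mem_compl_iff] at h2; tauto)
  have hpres : Pres G H := by
    intro M hM x hx
    by_cases hMA : ∀ m ∈ M, m ∈ A
    · by_cases hxA : x ∈ A
      · rcases hApres _ (isModule_induce hM A) ⟨x, hxA⟩ hx with h | h
        · exact Or.inl fun m hm => (hagreeA ⟨x, hxA⟩ ⟨m, hMA m hm⟩).mpr (h ⟨m, hMA m hm⟩ hm)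
        · exact Or.inr fun m hm ha =>
            h ⟨m, hMA m hm⟩ hm ((hagreeA ⟨x, hxA⟩ ⟨m, hMA m hm⟩).mp ha)
      · exact Or.inl fun m hm => Or.inr (Or.inr (Or.inr ⟨hxA, hMA m hm⟩))
    · by_cases hMB : ∀ m ∈ M, m ∈ Aᶜ
      · by_cases hxA : x ∈ A
        · exact Or.inl fun m hm => Or.inr (Or.inr (Or.inl ⟨hxA, hMB m hm⟩))
        · rcases hBpres _ (isModule_induce hM Aᶜ) ⟨x, hxA⟩ hx with h | h
          · exact Or.inl fun m hm => (hagreeB ⟨x, hxA⟩ ⟨m, hMB m hm⟩).mpr (h ⟨m, hMB m hm⟩ hm)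
          · exact Or.inr fun m hm ha =>
              h ⟨m, hMB m hm⟩ hm ((hagreeB ⟨x, hxA⟩ ⟨m, hMB m hm⟩).mp ha)
      · push_neg at hMA hMB
        obtain ⟨m₁, hm₁M, hm₁A⟩ := hMA
        obtain ⟨m₂, hm₂M, hm₂B⟩ := hMB
        rw [Set.notMem_compl_iff] at hm₂B
        left
        intro m hm
        by_cases hxA : x ∈ A
        · by_cases hmA : m ∈ A
          · refine (hagreeA ⟨x, hxA⟩ ⟨m, hmA⟩).mpr
              (hAfull {z : ↥A | (z : V) ∈ M} ?_ ⟨x, hxA⟩ hx ⟨m, hmA⟩ hm)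
            intro z hz w hw
            have hGz : ∀ mm ∈ M, G.Adj (z : V) mm := by
              rcases hM (z : V) hz with h | h
              · exact h
              · exact absurd (hco (z : V) z.2 m₁ hm₁A) (h m₁ hm₁M)
            exact hGz (w : V) hw
          · exact Or.inr (Or.inr (Or.inl ⟨hxA, hmA⟩))
        · by_cases hmA : m ∈ A
          · exact Or.inr (Or.inr (Or.inr ⟨hxA, hmA⟩))
          · refine (hagreeB ⟨x, hxA⟩ ⟨m, hmA⟩).mpr
              (hBfull {z : ↥(Aᶜ) | (z : V) ∈ M} ?_ ⟨x, hxA⟩ hx ⟨m, hmA⟩ hm)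
            intro z hz w hw
            have hGz : ∀ mm ∈ M, G.Adj (z : V) mm := by
              rcases hM (z : V) hz with h | h
              · exact h
              · exact absurd ((hco m₂ hm₂B (z : V) z.2).symm) (h m₂ hm₂M)
            exact hGz (w : V) hw
  have hfull : Full G H := by
    intro M hMfull x hx m hm
    by_cases hxA : x ∈ A
    · by_cases hmA : m ∈ A
      · exact (hagreeA ⟨x, hxA⟩ ⟨m, hmA⟩).mpr
          (hAfull {z : ↥A | (z : V) ∈ M} (fun z hz w hw => hMfull z hz w hw)
            ⟨x, hxA⟩ hx ⟨m, hmA⟩ hm)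
      · exact Or.inr (Or.inr (Or.inl ⟨hxA, hmA⟩))
    · by_cases hmA : m ∈ A
      · exact Or.inr (Or.inr (Or.inr ⟨hxA, hmA⟩))
      · exact (hagreeB ⟨x, hxA⟩ ⟨m, hmA⟩).mpr
          (hBfull {z : ↥(Aᶜ) | (z : V) ∈ M} (fun z hz w hw => hMfull z hz w hw)
            ⟨x, hxA⟩ hx ⟨m, hmA⟩ hm)
  have hopt : ∀ H', H' ≤ G → P4Free H' →
      (delPairs G H).ncard ≤ (delPairs G H').ncard := by
    intro H' hH'G hH'p4
    set H'' : SimpleGraph V :=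
      { Adj := fun x y => (((x ∈ A ∧ y ∈ A) ∨ (x ∈ Aᶜ ∧ y ∈ Aᶜ)) ∧ H'.Adj x y) ∨
          (x ∈ A ∧ y ∈ Aᶜ) ∨ (x ∈ Aᶜ ∧ y ∈ A)
        symm := Std.Symm.mk <| by
          rintro x y (⟨(⟨h1, h2⟩ | ⟨h1, h2⟩), h⟩ | ⟨h1, h2⟩ | ⟨h1, h2⟩)
          · exact Or.inl ⟨Or.inl ⟨h2, h1⟩, h.symm⟩
          · exact Or.inl ⟨Or.inr ⟨h2, h1⟩, h.symm⟩
          · exact Or.inr (Or.inr ⟨h2, h1⟩)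
          · exact Or.inr (Or.inl ⟨h2, h1⟩)
        loopless := Std.Irrefl.mk <| by
          rintro x (⟨_, h⟩ | ⟨h1, h2⟩ | ⟨h1, h2⟩)
          · exact h.ne rfl
          · exact h2 h1
          · exact h1 h2 } with hH''def
    have hle'' : ∀ x y : V, H'.Adj x y → H''.Adj x y := by
      intro x y h
      by_cases hx : x ∈ A <;> by_cases hy : y ∈ A
      · exact Or.inl ⟨Or.inl ⟨hx, hy⟩, h⟩
      · exact Or.inr (Or.inl ⟨hx, hy⟩)
      · exact Or.inr (Or.inr ⟨hx, hy⟩)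
      · exact Or.inl ⟨Or.inr ⟨hx, hy⟩, h⟩
    have hagreeA'' : ∀ a b : ↥A, H''.Adj a b ↔ (H'.induce A).Adj a b := by
      rintro ⟨a, ha⟩ ⟨b, hb⟩
      constructor
      · rintro (⟨(⟨h1, h2⟩ | ⟨h1, h2⟩), h⟩ | ⟨h1, h2⟩ | ⟨h1, h2⟩)
        · exact h
        · exact absurd ha h1
        · exact absurd hb h2
        · exact absurd ha h1
      · intro h; exact Or.inl ⟨Or.inl ⟨ha, hb⟩, h⟩
    have hagreeB'' : ∀ a b : ↥(Aᶜ), H''.Adj a b ↔ (H'.induce Aᶜ).Adj a b := by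
      rintro ⟨a, ha⟩ ⟨b, hb⟩
      constructor
      · rintro (⟨(⟨h1, h2⟩ | ⟨h1, h2⟩), h⟩ | ⟨h1, h2⟩ | ⟨h1, h2⟩)
        · exact absurd h1 ha
        · exact h
        · exact absurd h1 ha
        · exact absurd h2 hb
      · intro h; exact Or.inl ⟨Or.inr ⟨ha, hb⟩, h⟩
    have hmodA'' : IsModule H'' A := by
      intro x hx
      exact Or.inl fun v hv => Or.inr (Or.inr ⟨hx, hv⟩)
    have hmodB'' : IsModule H'' (Aᶜ) := by
      intro x hx
      rw [Set.notMem_compl_iff] at hx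
      exact Or.inl fun v hv => Or.inr (Or.inl ⟨hx, hv⟩)
    have hp4'' : P4Free H'' := by
      rintro a b c d hp
      rcases pattern hmodA'' hp with ⟨ha, hb, hc, hd⟩ | ⟨ha, hb, hc, hd⟩ | h1 | h1 | h1 | h1
      · exact P4Free_induce hH'p4 A _ _ _ _ (p4_part hagreeA'' ha hb hc hd hp)
      · exact P4Free_induce hH'p4 Aᶜ _ _ _ _ (p4_part hagreeB'' ha hb hc hd hp)
      · rcases pattern hmodB'' hp with h2 | h2 | h2 | h2 | h2 | h2 <;>
          (simp only [Set.mem_compl_iff] at h2; tauto)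
      · rcases pattern hmodB'' hp with h2 | h2 | h2 | h2 | h2 | h2 <;>
          (simp only [Set.mem_compl_iff] at h2; tauto)
      · rcases pattern hmodB'' hp with h2 | h2 | h2 | h2 | h2 | h2 <;>
          (simp only [Set.mem_compl_iff] at h2; tauto)
      · rcases pattern hmodB'' hp with h2 | h2 | h2 | h2 | h2 | h2 <;>
          (simp only [Set.mem_compl_iff] at h2; tauto)
    have hdec : ∀ K : SimpleGraph V, (∀ x ∈ A, ∀ y ∈ Aᶜ, K.Adj x y) → delPairs G K =
        {p : V × V | p.1 ∈ A ∧ p.2 ∈ A ∧ G.Adj p.1 p.2 ∧ ¬K.Adj p.1 p.2} ∪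
        {p : V × V | p.1 ∈ Aᶜ ∧ p.2 ∈ Aᶜ ∧ G.Adj p.1 p.2 ∧ ¬K.Adj p.1 p.2} := by
      intro K hK
      ext ⟨x, y⟩
      simp only [delPairs, Set.mem_union, Set.mem_setOf_eq]
      constructor
      · rintro ⟨ha, hn⟩
        by_cases hx : x ∈ A <;> by_cases hy : y ∈ A
        · exact Or.inl ⟨hx, hy, ha, hn⟩
        · exact absurd (hK x hx y hy) hn
        · exact absurd ((hK y hy x hx).symm) hn
        · exact Or.inr ⟨hx, hy, ha, hn⟩
      · rintro (⟨_, _, ha, hn⟩ | ⟨_, _, ha, hn⟩) <;> exact ⟨ha, hn⟩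
    have hdisj : ∀ K : SimpleGraph V, Disjoint
        {p : V × V | p.1 ∈ A ∧ p.2 ∈ A ∧ G.Adj p.1 p.2 ∧ ¬K.Adj p.1 p.2}
        {p : V × V | p.1 ∈ Aᶜ ∧ p.2 ∈ Aᶜ ∧ G.Adj p.1 p.2 ∧ ¬K.Adj p.1 p.2} := by
      intro K
      rw [Set.disjoint_left]
      rintro ⟨x, y⟩ ⟨hx, _, _, _⟩ ⟨hx', _, _, _⟩
      exact hx' hx
    have e1 : (delPairs G H).ncard =
        (delPairs (G.induce A) HA).ncard + (delPairs (G.induce Aᶜ) HB).ncard := by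
      rw [hdec H hcrossH, Set.ncard_union_eq (hdisj H) (Set.toFinite _) (Set.toFinite _),
        ncard_del_restrict hagreeA, ncard_del_restrict hagreeB]
    have e2 : (delPairs G H'').ncard =
        (delPairs (G.induce A) (H'.induce A)).ncard +
        (delPairs (G.induce Aᶜ) (H'.induce Aᶜ)).ncard := by
      rw [hdec H'' (fun x hx y hy => Or.inr (Or.inl ⟨hx, hy⟩)),
        Set.ncard_union_eq (hdisj H'') (Set.toFinite _) (Set.toFinite _),
        ncard_del_restrict hagreeA'', ncard_del_restrict hagreeB'']
    have hsub : delPairs G H'' ⊆ delPairs G H' := by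
      rintro ⟨x, y⟩ ⟨ha, hn⟩
      exact ⟨ha, fun h => hn (hle'' x y h)⟩
    calc (delPairs G H).ncard
        = (delPairs (G.induce A) HA).ncard + (delPairs (G.induce Aᶜ) HB).ncard := e1
      _ ≤ (delPairs (G.induce A) (H'.induce A)).ncard +
          (delPairs (G.induce Aᶜ) (H'.induce Aᶜ)).ncard :=
          Nat.add_le_add
            (hAopt _ (induce_mono_graph hH'G A) (P4Free_induce hH'p4 A))
            (hBopt _ (induce_mono_graph hH'G Aᶜ) (P4Free_induce hH'p4 Aᶜ))
      _ = (delPairs G H'').ncard := e2.symm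
      _ ≤ (delPairs G H').ncard := Set.ncard_le_ncard hsub (Set.toFinite _)
  exact ⟨H, ⟨hHG, hp4, hopt⟩, hpres, hfull⟩

lemma no_overlap [Finite V] {G : SimpleGraph V}
    (hns : ¬ ∃ A : Set V, A.Nonempty ∧ Aᶜ.Nonempty ∧ ∀ a ∈ A, ∀ b ∈ Aᶜ, ¬ G.Adj a b)
    (hnc : ¬ ∃ A : Set V, A.Nonempty ∧ Aᶜ.Nonempty ∧ ∀ a ∈ A, ∀ b ∈ Aᶜ, G.Adj a b)
    {A B : Set V} (hA : IsModule G A) (hB : IsModule G B)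
    (hU : A ∪ B = Set.univ) (hI : (A ∩ B).Nonempty) (hAB : (A \ B).Nonempty)
    (hBA : (B \ A).Nonempty) : False := by
  obtain ⟨y0, hy0A, hy0B⟩ := hI
  obtain ⟨x0, hx0A, hx0B⟩ := hAB
  obtain ⟨z0, hz0B, hz0A⟩ := hBA
  have hcomp : ∀ w, w ∉ A \ B → w ∈ B := by
    intro w hw
    by_cases hwA : w ∈ A
    · by_contra hwB
      exact hw ⟨hwA, hwB⟩
    · have : w ∈ A ∪ B := hU ▸ Set.mem_univ w
      rcases this with h | h
      · exact absurd h hwA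
      · exact h
  have key : ∀ x ∈ A \ B, ∀ z ∈ B, (G.Adj x z ↔ G.Adj x0 y0) := by
    intro x hx z hz
    have h1 : G.Adj x z ↔ G.Adj x z0 := mod_iff hB hx.2 hz hz0B
    have h2 : G.Adj z0 x ↔ G.Adj z0 x0 := mod_iff hA hz0A hx.1 hx0A
    have h3 : G.Adj x0 z0 ↔ G.Adj x0 y0 := mod_iff hB hx0B hz0B hy0B
    constructor
    · intro h
      exact h3.mp ((h2.mp ((h1.mp h).symm)).symm)
    · intro h
      exact h1.mpr ((h2.mpr ((h3.mpr h).symm)).symm)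
  have hXne : (A \ B).Nonempty := ⟨x0, hx0A, hx0B⟩
  have hXcne : ((A \ B)ᶜ).Nonempty := ⟨y0, fun h => h.2 hy0B⟩
  by_cases hc : G.Adj x0 y0
  · exact hnc ⟨A \ B, hXne, hXcne,
      fun a ha b hb => (key a ha b (hcomp b hb)).mpr hc⟩
  · exact hns ⟨A \ B, hXne, hXcne,
      fun a ha b hb hadj => hc ((key a ha b (hcomp b hb)).mp hadj)⟩

lemma case_prime [Finite V] {G : SimpleGraph V}
    (hns : ¬ ∃ A : Set V, A.Nonempty ∧ Aᶜ.Nonempty ∧ ∀ a ∈ A, ∀ b ∈ Aᶜ, ¬ G.Adj a b)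
    (hnc : ¬ ∃ A : Set V, A.Nonempty ∧ Aᶜ.Nonempty ∧ ∀ a ∈ A, ∀ b ∈ Aᶜ, G.Adj a b)
    (htwo : ∀ x : V, ∃ y, y ≠ x)
    (IH : ∀ P : Set V, P ≠ Set.univ → ∃ h, Sol (G.induce P) h) :
    ∃ H, Sol G H := by
  classical
  set 𝒞 : Set (Set V) := {P | IsModule G P ∧ P.Nonempty ∧ P ≠ Set.univ ∧
    ∀ Q, IsModule G Q → Q.Nonempty → Q ≠ Set.univ → P ⊆ Q → P = Q} with h𝒞
  have hmax : ∀ M : Set V, IsModule G M → M.Nonempty → M ≠ Set.univ → ∃ P ∈ 𝒞, M ⊆ P := by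
    intro M hM hMne hMuniv
    set S := {Q : Set V | IsModule G Q ∧ M ⊆ Q ∧ Q ≠ Set.univ} with hSdef
    have hSne : M ∈ S := ⟨hM, subset_rfl, hMuniv⟩
    obtain ⟨P, hPS, hPmax⟩ :=
      Set.exists_max_image S Set.ncard (Set.toFinite S) ⟨M, hSne⟩
    refine ⟨P, ⟨hPS.1, hMne.mono hPS.2.1, hPS.2.2, ?_⟩, hPS.2.1⟩
    intro Q hQ hQne hQuniv hPQ
    have hQS : Q ∈ S := ⟨hQ, hPS.2.1.trans hPQ, hQuniv⟩
    exact Set.eq_of_subset_of_ncard_le hPQ (hPmax Q hQS) (Set.toFinite _)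
  have hcover : ∀ x : V, ∃ P ∈ 𝒞, x ∈ P := by
    intro x
    obtain ⟨y, hy⟩ := htwo x
    have hsing : ({x} : Set V) ≠ Set.univ := by
      intro e
      exact hy (by simpa using (e ▸ Set.mem_univ y : y ∈ ({x} : Set V)))
    obtain ⟨P, hP, hsub⟩ := hmax {x} (module_singleton G x) ⟨x, rfl⟩ hsing
    exact ⟨P, hP, hsub rfl⟩
  have hdisjC : 𝒞.Pairwise Disjoint := by
    intro P hP Q hQ hPQ
    rw [Set.disjoint_left]
    intro z hzP hzQ
    have hPuQ : IsModule G (P ∪ Q) := module_union hP.1 hQ.1 ⟨z, hzP, hzQ⟩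
    by_cases hU : P ∪ Q = Set.univ
    · have hPQ1 : (P \ Q).Nonempty := by
        by_contra h
        rw [Set.not_nonempty_iff_eq_empty, Set.diff_eq_empty] at h
        exact hPQ (hP.2.2.2 Q hQ.1 hQ.2.1 hQ.2.2.1 h)
      have hQP1 : (Q \ P).Nonempty := by
        by_contra h
        rw [Set.not_nonempty_iff_eq_empty, Set.diff_eq_empty] at h
        exact hPQ ((hQ.2.2.2 P hP.1 hP.2.1 hP.2.2.1 h).symm)
      exact no_overlap hns hnc hP.1 hQ.1 hU ⟨z, hzP, hzQ⟩ hPQ1 hQP1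
    · have hPeq : P = P ∪ Q :=
        hP.2.2.2 (P ∪ Q) hPuQ ⟨z, Or.inl hzP⟩ hU Set.subset_union_left
      have hQP : Q ⊆ P := hPeq ▸ Set.subset_union_right
      exact hPQ ((hQ.2.2.2 P hP.1 hP.2.1 hP.2.2.1 hQP).symm)
  have hunique : ∀ {P Q : Set V}, P ∈ 𝒞 → Q ∈ 𝒞 → ∀ {x : V}, x ∈ P → x ∈ Q → P = Q := by
    intro P Q hP hQ x hxP hxQ
    by_contra hne
    exact (Set.disjoint_left.mp (hdisjC hP hQ hne) hxP) hxQ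
  -- global minimum
  have hbot : (⊥ : SimpleGraph V) ≤ G ∧ P4Free (⊥ : SimpleGraph V) :=
    ⟨bot_le, fun a b c d h => h.2.2.2.2.2.2.1⟩
  obtain ⟨H₀, hH₀S, hH₀min⟩ := Set.exists_min_image
    {K : SimpleGraph V | K ≤ G ∧ P4Free K} (fun K => (delPairs G K).ncard)
    (Set.toFinite _) ⟨⊥, hbot⟩
  obtain ⟨H₁, h1G, h1p4, h1c, h1uni⟩ := iter_exchange 𝒞 (Set.toFinite _)
    (fun P hP => ⟨hP.1, hP.2.1⟩) hdisjC H₀ hH₀S.1 hH₀S.2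
  have hIH' := fun (P : Set V) (hP : P ∈ 𝒞) => IH P hP.2.2.1
  choose sol hsol using hIH'
  set H₂ : SimpleGraph V :=
    { Adj := fun x y => (∃ (P : Set V) (hP : P ∈ 𝒞) (hx : x ∈ P) (hy : y ∈ P),
        (sol P hP).Adj ⟨x, hx⟩ ⟨y, hy⟩) ∨ ((∀ P ∈ 𝒞, ¬(x ∈ P ∧ y ∈ P)) ∧ H₁.Adj x y)
      symm := Std.Symm.mk <| by
        rintro x y (⟨P, hP, hx, hy, h⟩ | ⟨hn, h⟩)
        · exact Or.inl ⟨P, hP, hy, hx, h.symm⟩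
        · exact Or.inr ⟨fun P hP hc => hn P hP ⟨hc.2, hc.1⟩, h.symm⟩
      loopless := Std.Irrefl.mk <| by
        rintro x (⟨P, hP, hx, hy, h⟩ | ⟨hn, h⟩)
        · exact h.ne rfl
        · exact h.ne rfl } with hH₂def
  have hagreeP : ∀ (P : Set V) (hP : P ∈ 𝒞) (a b : ↥P),
      H₂.Adj a b ↔ (sol P hP).Adj a b := by
    intro P hP a b
    constructor
    · rintro (⟨Q, hQ, hx, hy, h⟩ | ⟨hn, _⟩)
      · have hQP : Q = P := hunique hQ hP hx a.2
        subst hQP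
        exact h
      · exact absurd ⟨a.2, b.2⟩ (hn P hP)
    · intro h
      exact Or.inl ⟨P, hP, a.2, b.2, h⟩
  have hcross₂ : ∀ x y : V, (∀ P ∈ 𝒞, ¬(x ∈ P ∧ y ∈ P)) → (H₂.Adj x y ↔ H₁.Adj x y) := by
    intro x y hn
    constructor
    · rintro (⟨P, hP, hx, hy, h⟩ | ⟨_, h⟩)
      · exact absurd ⟨hx, hy⟩ (hn P hP)
      · exact h
    · intro h
      exact Or.inr ⟨hn, h⟩
  have hmod₂ : ∀ P ∈ 𝒞, IsModule H₂ P := by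
    intro P hP x hx
    obtain ⟨m₀, hm₀⟩ := hP.2.1
    have key : ∀ m ∈ P, (H₂.Adj x m ↔ H₁.Adj x m₀) := by
      intro m hm
      have hn : ∀ R ∈ 𝒞, ¬(x ∈ R ∧ m ∈ R) := by
        rintro R hR ⟨hxR, hmR⟩
        exact hx ((hunique hR hP hmR hm) ▸ hxR)
      exact (hcross₂ x m hn).trans (h1uni P hP x hx m hm m₀ hm₀)
    by_cases h : H₁.Adj x m₀
    · exact Or.inl fun m hm => (key m hm).mpr h
    · exact Or.inr fun m hm ha => h ((key m hm).mp ha)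
  have hH₂G : H₂ ≤ G := by
    rintro x y (⟨P, hP, hx, hy, h⟩ | ⟨_, h⟩)
    · exact (hsol P hP).1.1 h
    · exact h1G h
  have hp4₂ : P4Free H₂ := by
    rintro a b c d hp
    obtain ⟨Pa, hPa, haPa⟩ := hcover a
    rcases pattern (hmod₂ Pa hPa) hp with ⟨ha, hb, hc, hd⟩ | ⟨ha, _, _, _⟩ |
      ⟨_, hb, hc, hd⟩ | ⟨ha, _, _, _⟩ | ⟨ha, _, _, _⟩ | ⟨ha, _, _, _⟩
    · exact (hsol Pa hPa).1.2.1 _ _ _ _ (p4_part (hagreeP Pa hPa) ha hb hc hd hp)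
    · exact ha haPa
    · -- b, c, d ∉ Pa
      obtain ⟨Pb, hPb, hbPb⟩ := hcover b
      obtain ⟨Pc, hPc, hcPc⟩ := hcover c
      have hcPb : c ∉ Pb ∧ d ∉ Pb := by
        rcases pattern (hmod₂ Pb hPb) hp with ⟨ha', _, _, _⟩ | ⟨_, hb', _, _⟩ |
          ⟨ha', _, _, _⟩ | ⟨_, _, hc', hd'⟩ | ⟨_, hb', _, _⟩ | ⟨_, hb', _, _⟩
        · exact absurd ((hunique hPb hPa ha' haPa) ▸ hbPb) hb
        · exact absurd hbPb hb'
        · exact absurd ((hunique hPb hPa ha' haPa) ▸ hbPb) hb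
        · exact ⟨hc', hd'⟩
        · exact absurd hbPb hb'
        · exact absurd hbPb hb'
      have hdPc : d ∉ Pc := by
        rcases pattern (hmod₂ Pc hPc) hp with ⟨ha', _, _, _⟩ | ⟨_, _, hc', _⟩ |
          ⟨ha', _, _, _⟩ | ⟨_, _, hc', _⟩ | ⟨_, _, _, hd'⟩ | ⟨_, _, hc', _⟩
        · exact absurd ((hunique hPc hPa ha' haPa) ▸ hcPc) hc
        · exact absurd hcPc hc'
        · exact absurd ((hunique hPc hPa ha' haPa) ▸ hcPc) hc
        · exact absurd hcPc hc'
        · exact hd'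
        · exact absurd hcPc hc'
      have noab : ∀ R ∈ 𝒞, ¬(a ∈ R ∧ b ∈ R) := by
        rintro R hR ⟨haR, hbR⟩
        exact hb ((hunique hR hPa haR haPa) ▸ hbR)
      have noac : ∀ R ∈ 𝒞, ¬(a ∈ R ∧ c ∈ R) := by
        rintro R hR ⟨haR, hcR⟩
        exact hc ((hunique hR hPa haR haPa) ▸ hcR)
      have noad : ∀ R ∈ 𝒞, ¬(a ∈ R ∧ d ∈ R) := by
        rintro R hR ⟨haR, hdR⟩
        exact hd ((hunique hR hPa haR haPa) ▸ hdR)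
      have nobc : ∀ R ∈ 𝒞, ¬(b ∈ R ∧ c ∈ R) := by
        rintro R hR ⟨hbR, hcR⟩
        exact hcPb.1 ((hunique hR hPb hbR hbPb) ▸ hcR)
      have nobd : ∀ R ∈ 𝒞, ¬(b ∈ R ∧ d ∈ R) := by
        rintro R hR ⟨hbR, hdR⟩
        exact hcPb.2 ((hunique hR hPb hbR hbPb) ▸ hdR)
      have nocd : ∀ R ∈ 𝒞, ¬(c ∈ R ∧ d ∈ R) := by
        rintro R hR ⟨hcR, hdR⟩
        exact hdPc ((hunique hR hPc hcR hcPc) ▸ hdR)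
      obtain ⟨hab, hac, had, hbc, hbd, hcd, eab, ebc, ecd, nac, nad, nbd⟩ := hp
      exact h1p4 a b c d ⟨hab, hac, had, hbc, hbd, hcd,
        (hcross₂ a b noab).mp eab, (hcross₂ b c nobc).mp ebc, (hcross₂ c d nocd).mp ecd,
        fun h => nac ((hcross₂ a c noac).mpr h), fun h => nad ((hcross₂ a d noad).mpr h),
        fun h => nbd ((hcross₂ b d nobd).mpr h)⟩
    · exact ha haPa
    · exact ha haPa
    · exact ha haPa
  have hpres₂ : Pres G H₂ := by
    intro M hM
    by_cases hMe : M = ∅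
    · subst hMe
      intro x _
      exact Or.inl fun v hv => absurd hv (Set.notMem_empty v)
    by_cases hMu : M = Set.univ
    · subst hMu
      intro x hx
      exact absurd (Set.mem_univ x) hx
    have hMne : M.Nonempty := Set.nonempty_iff_ne_empty.mpr hMe
    obtain ⟨P, hP, hMP⟩ := hmax M hM hMne hMu
    intro x hx
    by_cases hxP : x ∈ P
    · rcases (hsol P hP).2.1 _ (isModule_induce hM P) ⟨x, hxP⟩ hx with h | h
      · exact Or.inl fun m hm =>
          (hagreeP P hP ⟨x, hxP⟩ ⟨m, hMP hm⟩).mpr (h ⟨m, hMP hm⟩ hm)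
      · exact Or.inr fun m hm ha =>
          h ⟨m, hMP hm⟩ hm ((hagreeP P hP ⟨x, hxP⟩ ⟨m, hMP hm⟩).mp ha)
    · obtain ⟨m₀, hm₀⟩ := hMne
      have key : ∀ m ∈ M, (H₂.Adj x m ↔ H₁.Adj x m₀) := by
        intro m hm
        have hn : ∀ R ∈ 𝒞, ¬(x ∈ R ∧ m ∈ R) := by
          rintro R hR ⟨hxR, hmR⟩
          exact hxP ((hunique hR hP hmR (hMP hm)) ▸ hxR)
        exact (hcross₂ x m hn).trans (h1uni P hP x hxP m (hMP hm) m₀ (hMP hm₀))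
      by_cases h : H₁.Adj x m₀
      · exact Or.inl fun m hm => (key m hm).mpr h
      · exact Or.inr fun m hm ha => h ((key m hm).mp ha)
  have hfull₂ : Full G H₂ := by
    intro M hMfull x hx m hm
    exact absurd ⟨M, ⟨m, hm⟩, ⟨x, hx⟩, fun p hp q hq => (hMfull q hq p hp).symm⟩ hnc
  have hopt₂ : ∀ H', H' ≤ G → P4Free H' →
      (delPairs G H₂).ncard ≤ (delPairs G H').ncard := by
    intro H' hH'G hH'p4
    have hfin := Set.toFinite 𝒞
    set SameOf : SimpleGraph V → Set (V × V) := fun K =>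
      {p | (∃ P ∈ 𝒞, p.1 ∈ P ∧ p.2 ∈ P) ∧ G.Adj p.1 p.2 ∧ ¬K.Adj p.1 p.2} with hSameOf
    set DiffOf : SimpleGraph V → Set (V × V) := fun K =>
      {p | (∀ P ∈ 𝒞, ¬(p.1 ∈ P ∧ p.2 ∈ P)) ∧ G.Adj p.1 p.2 ∧ ¬K.Adj p.1 p.2} with hDiffOf
    have hdec : ∀ K : SimpleGraph V,
        (delPairs G K).ncard = (SameOf K).ncard + (DiffOf K).ncard := by
      intro K
      have he : delPairs G K = SameOf K ∪ DiffOf K := by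
        ext ⟨x, y⟩
        simp only [delPairs, hSameOf, hDiffOf, Set.mem_union, Set.mem_setOf_eq]
        constructor
        · rintro ⟨ha, hn⟩
          by_cases hex : ∃ P ∈ 𝒞, x ∈ P ∧ y ∈ P
          · exact Or.inl ⟨hex, ha, hn⟩
          · exact Or.inr ⟨fun P hP hc => hex ⟨P, hP, hc⟩, ha, hn⟩
        · rintro (⟨_, ha, hn⟩ | ⟨_, ha, hn⟩) <;> exact ⟨ha, hn⟩
      have hdisj : Disjoint (SameOf K) (DiffOf K) := by
        rw [Set.disjoint_left]
        rintro ⟨x, y⟩ ⟨⟨P, hP, hx, hy⟩, _, _⟩ ⟨hn, _, _⟩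
        exact hn P hP ⟨hx, hy⟩
      rw [he, Set.ncard_union_eq hdisj (Set.toFinite _) (Set.toFinite _)]
    have hDiffeq : DiffOf H₂ = DiffOf H₁ := by
      ext ⟨x, y⟩
      simp only [hDiffOf, Set.mem_setOf_eq]
      constructor
      · rintro ⟨hn, ha, hnK⟩
        exact ⟨hn, ha, fun h => hnK ((hcross₂ x y hn).mpr h)⟩
      · rintro ⟨hn, ha, hnK⟩
        exact ⟨hn, ha, fun h => hnK ((hcross₂ x y hn).mp h)⟩
    set fOf : SimpleGraph V → Set V → Set (V × V) := fun K P =>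
      {p | p.1 ∈ P ∧ p.2 ∈ P ∧ G.Adj p.1 p.2 ∧ ¬K.Adj p.1 p.2} with hfOf
    have hSameUnion : ∀ K : SimpleGraph V, SameOf K = ⋃ P ∈ hfin.toFinset, fOf K P := by
      intro K
      ext ⟨x, y⟩
      simp only [hSameOf, hfOf, Set.mem_setOf_eq, Set.mem_iUnion, Set.Finite.mem_toFinset]
      constructor
      · rintro ⟨⟨P, hP, hx, hy⟩, ha, hn⟩
        exact ⟨P, hP, hx, hy, ha, hn⟩
      · rintro ⟨P, hP, hx, hy, ha, hn⟩
        exact ⟨⟨P, hP, hx, hy⟩, ha, hn⟩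
    have hfdisj : ∀ K : SimpleGraph V, ∀ P ∈ hfin.toFinset, ∀ Q ∈ hfin.toFinset, P ≠ Q →
        Disjoint (fOf K P) (fOf K Q) := by
      intro K P hP Q hQ hPQ
      rw [Set.disjoint_left]
      rintro ⟨x, y⟩ ⟨hx, _, _, _⟩ ⟨hx', _, _, _⟩
      exact hPQ (hunique (hfin.mem_toFinset.mp hP) (hfin.mem_toFinset.mp hQ) hx hx')
    have hfle : ∀ P ∈ hfin.toFinset, (fOf H₂ P).ncard ≤ (fOf H₁ P).ncard := by
      intro P hPt
      have hP : P ∈ 𝒞 := hfin.mem_toFinset.mp hPt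
      have e1 : (fOf H₂ P).ncard = (delPairs (G.induce P) (sol P hP)).ncard :=
        ncard_del_restrict (fun a b => hagreeP P hP a b)
      have e2 : (fOf H₁ P).ncard = (delPairs (G.induce P) (H₁.induce P)).ncard :=
        ncard_del_restrict (h := H₁.induce P) (fun a b => Iff.rfl)
      rw [e1, e2]
      exact (hsol P hP).1.2.2 _ (induce_mono_graph h1G P) (P4Free_induce h1p4 P)
    have hSamele : (SameOf H₂).ncard ≤ (SameOf H₁).ncard := by
      rw [hSameUnion H₂, hSameUnion H₁]
      exact ncard_biUnion_le_biUnion hfin.toFinset (fOf H₂) (fOf H₁)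
        (hfdisj H₂) (hfdisj H₁) hfle
    calc (delPairs G H₂).ncard = (SameOf H₂).ncard + (DiffOf H₂).ncard := hdec H₂
      _ ≤ (SameOf H₁).ncard + (DiffOf H₁).ncard := by rw [hDiffeq]; exact Nat.add_le_add_right hSamele _
      _ = (delPairs G H₁).ncard := (hdec H₁).symm
      _ ≤ (delPairs G H₀).ncard := h1c
      _ ≤ (delPairs G H').ncard := hH₀min H' ⟨hH'G, hH'p4⟩
  exact ⟨H₂, ⟨hH₂G, hp4₂, hopt₂⟩, hpres₂, hfull₂⟩

lemma sol_self {G : SimpleGraph V} (hG : P4Free G) : Sol G G := by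
  refine ⟨⟨le_rfl, hG, ?_⟩, fun M hM => hM, fun M h => h⟩
  intro H' _ _
  have : delPairs G G = ∅ := by
    ext ⟨x, y⟩
    simp only [delPairs, Set.mem_setOf_eq, Set.mem_empty_iff_false, iff_false, not_and, not_not]
    exact fun h => h
  rw [this]
  simp

lemma card_part_le {A : Set V} [Finite V] {n : ℕ} (hA : A ≠ Set.univ)
    (hc : Nat.card V ≤ n + 1) : Nat.card ↥A ≤ n := by
  have h1 : A.ncard < (Set.univ : Set V).ncard :=
    Set.ncard_lt_ncard (Set.ssubset_univ_iff.mpr hA) (Set.toFinite _)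
  rw [Set.ncard_univ] at h1
  rw [Nat.card_coe_set_eq]
  omega

universe u

theorem main_aux (n : ℕ) : ∀ (W : Type u) [Finite W] (G : SimpleGraph W),
    Nat.card W ≤ n → ∃ H, Sol G H := by
  induction n with
  | zero =>
    intro W _ G hc
    have : IsEmpty W := by
      rcases Nat.card_eq_zero.mp (Nat.le_zero.mp hc) with h | h
      · exact h
      · exact absurd h (not_infinite_iff_finite.mpr ‹_›)
    exact ⟨G, sol_self (fun a => (this.false a).elim)⟩
  | succ n ih =>
    intro W _ G hc
    by_cases hp4 : P4Free G
    · exact ⟨G, sol_self hp4⟩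
    by_cases hsplit : ∃ A : Set W, A.Nonempty ∧ Aᶜ.Nonempty ∧ ∀ a ∈ A, ∀ b ∈ Aᶜ, ¬ G.Adj a b
    · obtain ⟨A, hAne, hAcne, hsp⟩ := hsplit
      have hAu : A ≠ Set.univ := by
        intro e
        obtain ⟨z, hz⟩ := hAcne
        exact hz (e ▸ Set.mem_univ z)
      have hAcu : Aᶜ ≠ Set.univ := by
        intro e
        obtain ⟨z, hz⟩ := hAne
        exact (e ▸ Set.mem_univ z : z ∈ Aᶜ) hz
      obtain ⟨HA, sA⟩ := ih ↥A (G.induce A) (card_part_le hAu hc)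
      obtain ⟨HB, sB⟩ := ih ↥(Aᶜ) (G.induce Aᶜ) (card_part_le hAcu hc)
      exact case_split hsp sA sB
    by_cases hco : ∃ A : Set W, A.Nonempty ∧ Aᶜ.Nonempty ∧ ∀ a ∈ A, ∀ b ∈ Aᶜ, G.Adj a b
    · obtain ⟨A, hAne, hAcne, hcp⟩ := hco
      have hAu : A ≠ Set.univ := by
        intro e
        obtain ⟨z, hz⟩ := hAcne
        exact hz (e ▸ Set.mem_univ z)
      have hAcu : Aᶜ ≠ Set.univ := by
        intro e
        obtain ⟨z, hz⟩ := hAne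
        exact (e ▸ Set.mem_univ z : z ∈ Aᶜ) hz
      obtain ⟨HA, sA⟩ := ih ↥A (G.induce A) (card_part_le hAu hc)
      obtain ⟨HB, sB⟩ := ih ↥(Aᶜ) (G.induce Aᶜ) (card_part_le hAcu hc)
      exact case_cosplit hcp sA sB
    · have htwo : ∀ x : W, ∃ y, y ≠ x := by
        rw [P4Free] at hp4
        push_neg at hp4
        obtain ⟨a, b, c, d, hp⟩ := hp4
        intro x
        by_cases h : x = a
        · subst h
          exact ⟨b, fun e => hp.1 e.symm⟩
        · exact ⟨a, fun e => h e.symm⟩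
      exact case_prime hsplit hco htwo
        (fun P hPu => ih ↥P (G.induce P) (card_part_le hPu hc))

end AuxiliaryProofs

theorem stmt5 [Finite V] (G : SimpleGraph V) :
    ∃ F : Set (Sym2 V), IsOptDelSet G F ∧
      ∀ M : Set V, IsModule G M → IsModule (G.deleteEdges F) M := by
  obtain ⟨H, ⟨hHG, hp4, hopt⟩, hpres, -⟩ := main_aux (Nat.card V) V G le_rfl
  have hdel : G.deleteEdges (G.edgeSet \ H.edgeSet) = H := by
    ext x y
    simp only [SimpleGraph.deleteEdges_adj, Set.mem_diff, SimpleGraph.mem_edgeSet]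
    constructor
    · rintro ⟨ha, hn⟩
      by_contra hH
      exact hn ⟨ha, hH⟩
    · intro h
      exact ⟨hHG h, fun hc => hc.2 h⟩
  have htwomul : ∀ K : SimpleGraph V, K ≤ G →
      2 * (G.edgeSet \ K.edgeSet).ncard = (delPairs G K).ncard := by
    intro K _
    have h1 : delPairs G K = {p : V × V | (G \ K).Adj p.1 p.2} := by
      ext ⟨x, y⟩
      simp [delPairs, SimpleGraph.sdiff_adj]
    rw [h1, ncard_pairs_eq_two_mul_edge, SimpleGraph.edgeSet_sdiff]
  refine ⟨G.edgeSet \ H.edgeSet, ⟨⟨Set.diff_subset, by rw [hdel]; exact hp4⟩, ?_⟩, ?_⟩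
  · rintro F' ⟨hF'sub, hF'p4⟩
    set H' := G.deleteEdges F' with hH'
    have hH'G : H' ≤ G := SimpleGraph.deleteEdges_le F'
    have hF'eq : G.edgeSet \ H'.edgeSet = F' := by
      rw [hH', SimpleGraph.edgeSet_deleteEdges, Set.diff_diff_cancel_left hF'sub]
    have := hopt H' hH'G hF'p4
    rw [← htwomul H hHG, ← htwomul H' hH'G] at this
    rw [hF'eq] at this
    omega
  · intro M hM
    rw [hdel]
    exact hpres M hM
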